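/- Let ρ and σ be density matrices on a d-dimensional Hilbert space with trace distance T = (1/2)‖ρ − σ‖₁ ≤ 1/e. Then the von Neumann entropies satisfy |S(ρ) − S(σ)| ≤ 2T·log d + η(2T), where η(x) = −x log x (Fannes' inequality). -/

import Mathlib

open Matrix Finset
open scoped ComplexOrder

section FannesAux

variable {d : ℕ}



/-- tangent line bound for η(x) = -x log x : η a ≤ -a log b + b - a. -/
lemma eta_tangent {a b : ℝ} (ha : 0 ≤ a) (hb : 0 < b) :
    -(a * Real.log a) ≤ -(a * Real.log b) + b - a := by
  rcases eq_or_lt_of_le ha with h | h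
  · simp [← h]; linarith
  · have hlog : Real.log (b / a) ≤ b / a - 1 := Real.log_le_sub_one_of_pos (by positivity)
    rw [Real.log_div (ne_of_gt hb) (ne_of_gt h)] at hlog
    have := mul_le_mul_of_nonneg_left hlog (le_of_lt h)
    rw [mul_sub, mul_sub, mul_div_cancel₀ _ (ne_of_gt h)] at this
    nlinarith

/-- subadditivity of η -/
lemma eta_subadd {a b : ℝ} (ha : 0 ≤ a) (hb : 0 ≤ b) :
    -((a + b) * Real.log (a + b)) ≤ -(a * Real.log a) + -(b * Real.log b) := by
  rcases eq_or_lt_of_le ha with h | h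
  · simp [← h]
  rcases eq_or_lt_of_le hb with h' | h'
  · simp [← h']
  have h1 : Real.log a ≤ Real.log (a + b) := Real.log_le_log h (by linarith)
  have h2 : Real.log b ≤ Real.log (a + b) := Real.log_le_log h' (by linarith)
  nlinarith

lemma eta_nonneg {x : ℝ} (h0 : 0 ≤ x) (h1 : x ≤ 1) : 0 ≤ -(x * Real.log x) := by
  have := Real.log_nonpos h0 h1
  nlinarith

/-- per-pair Fannes lemma -/
lemma eta_perpair {x y : ℝ} (hx0 : 0 ≤ x) (hy0 : 0 ≤ y) (hx1 : x ≤ 1) (hy1 : y ≤ 1)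
    (ht : |x - y| ≤ 1 / Real.exp 1) :
    |(-(x * Real.log x)) - (-(y * Real.log y))| ≤ -(|x - y| * Real.log |x - y|) := by
  -- wlog y ≤ x
  have key : ∀ u v : ℝ, 0 ≤ v → u ≤ 1 → v ≤ u → u - v ≤ 1 / Real.exp 1 →
      |(-(u * Real.log u)) - (-(v * Real.log v))| ≤ -((u - v) * Real.log (u - v)) := by
    intro u v hv0 hu1 hvu htuv
    set t := u - v with htdef
    have ht0 : 0 ≤ t := by linarith
    rcases eq_or_lt_of_le ht0 with h | h
    · have : u = v := by linarith [h.symm ▸ htdef]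
      simp [this, ← h]
    have hu0 : 0 < u := by linarith
    have hetat : t ≤ -(t * Real.log t) := by
      have : Real.log t ≤ -1 := by
        calc Real.log t ≤ Real.log (1 / Real.exp 1) := Real.log_le_log h htuv
        _ = -1 := by rw [one_div, Real.log_inv, Real.log_exp]
      nlinarith
    rw [abs_le]
    constructor
    · -- η v - η u ≤ η t ; first η v - η u ≤ t
      have hd : -(v * Real.log v) - (-(u * Real.log u)) ≤ t := by
        rcases eq_or_lt_of_le hv0 with hv | hv
        · have hlu : Real.log u ≤ 0 := Real.log_nonpos (le_of_lt hu0) hu1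
          simp [← hv]
          nlinarith
        · -- v>0 : v(log u - log v) + t log u ≤ t
          have h1 : Real.log u - Real.log v ≤ u/v - 1 := by
            have := Real.log_le_sub_one_of_pos (show (0:ℝ) < u/v by positivity)
            rwa [Real.log_div (ne_of_gt hu0) (ne_of_gt hv)] at this
          have h2 : Real.log u ≤ 0 := Real.log_nonpos (le_of_lt hu0) hu1
          have h3 : v * (Real.log u - Real.log v) ≤ t := by
            have := mul_le_mul_of_nonneg_left h1 (le_of_lt hv)
            have hvv : v * (u / v - 1) = u - v := by
              field_simp
            rw [hvv] at this
            linarith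
          nlinarith
      linarith
    · -- η u - η v ≤ η t by subadditivity: u = v + t
      have := eta_subadd hv0 ht0
      rw [show v + t = u by ring] at this
      linarith
  rcases le_total y x with h | h
  · have := key x y hy0 hx1 h (by rwa [abs_of_nonneg (by linarith)] at ht)
    rwa [abs_of_nonneg (by linarith : (0:ℝ) ≤ x - y)]
  · have := key y x hx0 hy1 h (by rwa [abs_of_nonpos (by linarith), neg_sub] at ht)
    rw [abs_of_nonpos (by linarith : x - y ≤ 0), neg_sub]
    rw [abs_sub_comm]
    exact this


/-- grouping: ∑ η(f i) ≤ (∑ f) log d + η(∑ f) -/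
lemma eta_grouping {d : ℕ} (f : Fin d → ℝ) (hf : ∀ i, 0 ≤ f i) :
    ∑ i, -(f i * Real.log (f i)) ≤ (∑ i, f i) * Real.log d + -((∑ i, f i) * Real.log (∑ i, f i)) := by
  set s := ∑ i, f i with hs
  have hs0 : 0 ≤ s := Finset.sum_nonneg fun i _ => hf i
  rcases eq_or_lt_of_le hs0 with h | h
  · have hall : ∀ i ∈ Finset.univ, f i = 0 := by
      intro i _
      have := (Finset.sum_eq_zero_iff_of_nonneg (fun i _ => hf i)).mp h.symm
      exact this i (Finset.mem_univ i)
    have : ∀ i ∈ Finset.univ, -(f i * Real.log (f i)) = 0 := by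
      intro i hi; rw [hall i hi]; simp
    rw [Finset.sum_congr rfl this]
    simp [← h]
  · have hd : 0 < d := by
      obtain ⟨i, _, _⟩ := Finset.exists_ne_zero_of_sum_ne_zero
        (show ∑ i, f i ≠ 0 by rw [← hs]; exact ne_of_gt h)
      exact i.pos
    have hb : (0:ℝ) < s / d := by positivity
    have key : ∀ i : Fin d, -(f i * Real.log (f i)) ≤ -(f i * Real.log (s/d)) + s/d - f i :=
      fun i => eta_tangent (hf i) hb
    calc ∑ i, -(f i * Real.log (f i)) ≤ ∑ i, (-(f i * Real.log (s/d)) + s/d - f i) :=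
          Finset.sum_le_sum (fun i _ => key i)
    _ = -(s * Real.log (s/d)) + d * (s/d) - s := by
        rw [Finset.sum_sub_distrib, Finset.sum_add_distrib]
        have e1 : ∑ _x : Fin d, s/(d:ℝ) = d * (s/d) := by
          simp [Finset.sum_const, Finset.card_univ, nsmul_eq_mul]
        have e2 : ∑ x : Fin d, -(f x * Real.log (s/d)) = -(s * Real.log (s/d)) := by
          rw [Finset.sum_neg_distrib, ← Finset.sum_mul, ← hs]
        rw [e1, e2, ← hs]
    _ = s * Real.log d + -(s * Real.log s) := by
        rw [Real.log_div (ne_of_gt h) (by positivity)]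
        field_simp
        ring


/-- monotonicity of x ↦ x log D + η x on [0, D/e] -/
lemma eta_mono_step {e t : ℝ} {D : ℝ} (he0 : 0 ≤ e) (het : e ≤ t) (ht : t ≤ 2 / Real.exp 1)
    (hD : 2 ≤ D) :
    e * Real.log D + -(e * Real.log e) ≤ t * Real.log D + -(t * Real.log t) := by
  rcases eq_or_lt_of_le (he0.trans het) with h | h
  · have : e = 0 := le_antisymm (h ▸ het) he0
    simp [this, ← h]
  have h1 : -(e * Real.log e) ≤ -(e * Real.log t) + t - e := eta_tangent he0 h
  have h2 : Real.log t + 1 ≤ Real.log D := by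
    have : Real.log t ≤ Real.log (2 / Real.exp 1) := Real.log_le_log h ht
    rw [Real.log_div (by norm_num) (ne_of_gt (Real.exp_pos 1)), Real.log_exp] at this
    have h3 : Real.log 2 ≤ Real.log D := Real.log_le_log (by norm_num) hD
    linarith
  nlinarith [sub_nonneg.mpr het]

/-- each coordinate difference is at most half the ℓ¹ distance when sums agree -/
lemma half_l1 {d : ℕ} (p q : Fin d → ℝ) (h : ∑ i, p i = ∑ i, q i) (i : Fin d) :
    |p i - q i| ≤ (∑ j, |p j - q j|) / 2 := by
  have hsplit : ∑ j, (p j - q j) = 0 := by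
    rw [Finset.sum_sub_distrib, h, sub_self]
  have h2 : p i - q i = -∑ j ∈ Finset.univ.erase i, (p j - q j) := by
    have hkey := Finset.add_sum_erase Finset.univ (fun j => p j - q j) (Finset.mem_univ i)
    rw [← hkey] at hsplit
    linarith
  have h3 : |p i - q i| ≤ ∑ j ∈ Finset.univ.erase i, |p j - q j| := by
    rw [h2, abs_neg]
    exact Finset.abs_sum_le_sum_abs _ _
  have h4 : ∑ j, |p j - q j| = |p i - q i| + ∑ j ∈ Finset.univ.erase i, |p j - q j| := by
    have hkey := Finset.add_sum_erase Finset.univ (fun j => |p j - q j|) (Finset.mem_univ i)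
    rw [← hkey]
  linarith

/-- classical Fannes inequality, one-sided -/
lemma classical_fannes {d : ℕ} (p q : Fin d → ℝ) (hp : ∀ i, 0 ≤ p i) (hq : ∀ i, 0 ≤ q i)
    (hps : ∑ i, p i = 1) (hqs : ∑ i, q i = 1) (t : ℝ)
    (hl1 : ∑ i, |p i - q i| ≤ t) (ht : t ≤ 2 / Real.exp 1) :
    (∑ i, -(p i * Real.log (p i))) - (∑ i, -(q i * Real.log (q i)))
      ≤ t * Real.log d + -(t * Real.log t) := by
  have ht0 : 0 ≤ t := le_trans (Finset.sum_nonneg fun i _ => abs_nonneg _) hl1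
  have hp1 : ∀ i, p i ≤ 1 := by
    intro i
    calc p i ≤ ∑ j, p j := Finset.single_le_sum (fun j _ => hp j) (Finset.mem_univ i)
    _ = 1 := hps
  have hq1 : ∀ i, q i ≤ 1 := by
    intro i
    calc q i ≤ ∑ j, q j := Finset.single_le_sum (fun j _ => hq j) (Finset.mem_univ i)
    _ = 1 := hqs
  rcases Nat.lt_or_ge d 2 with hd | hd
  · -- d = 0 or 1 : p = q, LHS = 0 ≤ RHS
    have hpq : ∀ i, p i = q i := by
      intro i
      interval_cases d
      · exact absurd hps (by simp)
      · have huniv : ∀ (f : Fin 1 → ℝ), ∑ x, f x = f i := by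
          intro f
          rw [Fin.sum_univ_one]
          congr 1
          exact Subsingleton.elim 0 i
        have h1 : p i = 1 := by rw [← hps, huniv]
        have h2 : q i = 1 := by rw [← hqs, huniv]
        rw [h1, h2]
    have : (∑ i, -(p i * Real.log (p i))) = (∑ i, -(q i * Real.log (q i))) := by
      apply Finset.sum_congr rfl; intro i _; rw [hpq i]
    rw [this, sub_self]
    have h2 : 0 ≤ -(t * Real.log t) := by
      apply eta_nonneg ht0
      have : 2 / Real.exp 1 ≤ 1 := by
        rw [div_le_one (Real.exp_pos 1)]
        have := Real.add_one_le_exp 1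
        linarith
      linarith
    have h3 : 0 ≤ t * Real.log d := by
      rcases Nat.eq_zero_or_pos d with h0 | h0
      · subst h0; simp
      · have : (1:ℝ) ≤ d := by exact_mod_cast h0
        exact mul_nonneg ht0 (Real.log_nonneg this)
    linarith
  · -- main case d ≥ 2
    set ε := ∑ i, |p i - q i| with hε
    have hε0 : 0 ≤ ε := Finset.sum_nonneg fun i _ => abs_nonneg _
    have hhalf : ∀ i, |p i - q i| ≤ 1 / Real.exp 1 := by
      intro i
      calc |p i - q i| ≤ ε / 2 := half_l1 p q (by rw [hps, hqs]) i
      _ ≤ t / 2 := by linarith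
      _ ≤ 1 / Real.exp 1 := by
          have : 2 / Real.exp 1 = 2 * (1 / Real.exp 1) := by ring
          linarith
    have step1 : (∑ i, -(p i * Real.log (p i))) - (∑ i, -(q i * Real.log (q i)))
        ≤ ∑ i, -(|p i - q i| * Real.log |p i - q i|) := by
      rw [← Finset.sum_sub_distrib]
      apply Finset.sum_le_sum
      intro i _
      calc -(p i * Real.log (p i)) - -(q i * Real.log (q i))
          ≤ |(-(p i * Real.log (p i))) - (-(q i * Real.log (q i)))| := le_abs_self _
      _ ≤ -(|p i - q i| * Real.log |p i - q i|) :=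
          eta_perpair (hp i) (hq i) (hp1 i) (hq1 i) (hhalf i)
    have step2 : ∑ i, -(|p i - q i| * Real.log |p i - q i|)
        ≤ ε * Real.log d + -(ε * Real.log ε) :=
      eta_grouping (fun i => |p i - q i|) (fun i => abs_nonneg _)
    have step3 : ε * Real.log d + -(ε * Real.log ε) ≤ t * Real.log d + -(t * Real.log t) :=
      eta_mono_step hε0 hl1 ht (by exact_mod_cast hd)
    linarith



/-- real part of diagonal entry of W D Wᴴ -/
lemma diag_entry_re (W : Matrix (Fin d) (Fin d) ℂ) (lam : Fin d → ℝ) (i : Fin d) :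
    ((W * diagonal ((RCLike.ofReal ∘ lam : Fin d → ℂ)) * Wᴴ) i i).re
      = ∑ j, lam j * Complex.normSq (W i j) := by
  rw [mul_apply]
  rw [Complex.re_sum]
  apply Finset.sum_congr rfl
  intro j _
  rw [mul_diagonal, conjTranspose_apply]
  have : W i j * ((RCLike.ofReal ∘ lam : Fin d → ℂ)) j * star (W i j)
      = (lam j : ℂ) * ((Complex.normSq (W i j) : ℝ) : ℂ)
       := by
    simp only [Function.comp_apply, RCLike.star_def]
    rw [mul_comm (W i j), mul_assoc, Complex.mul_conj]
    rfl
  rw [this]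
  simp

lemma row_sums (W : Matrix (Fin d) (Fin d) ℂ) (hW : W ∈ Matrix.unitaryGroup (Fin d) ℂ)
    (i : Fin d) : ∑ j, Complex.normSq (W i j) = 1 := by
  have h1 : W * Wᴴ = 1 := Matrix.mem_unitaryGroup_iff.mp hW
  have h2 : (W * Wᴴ) i i = 1 := by rw [h1]; simp
  rw [mul_apply] at h2
  have h3 : ∀ j, W i j * Wᴴ j i = ((Complex.normSq (W i j) : ℝ) : ℂ) := by
    intro j
    rw [conjTranspose_apply, RCLike.star_def, Complex.mul_conj]
  rw [Finset.sum_congr rfl (fun j _ => h3 j)] at h2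
  have := congrArg Complex.re h2
  rw [Complex.re_sum] at this
  simpa using this

lemma col_sums (W : Matrix (Fin d) (Fin d) ℂ) (hW : W ∈ Matrix.unitaryGroup (Fin d) ℂ)
    (j : Fin d) : ∑ i, Complex.normSq (W i j) = 1 := by
  have h1 : Wᴴ * W = 1 := Matrix.mem_unitaryGroup_iff'.mp hW
  have h2 : (Wᴴ * W) j j = 1 := by rw [h1]; simp
  rw [mul_apply] at h2
  have h3 : ∀ i, Wᴴ j i * W i j = ((Complex.normSq (W i j) : ℝ) : ℂ) := by
    intro i
    rw [conjTranspose_apply, RCLike.star_def, mul_comm, Complex.mul_conj]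
  rw [Finset.sum_congr rfl (fun i _ => h3 i)] at h2
  have := congrArg Complex.re h2
  rw [Complex.re_sum] at this
  simpa using this

lemma sum_eigenvalues_eq_one {A : Matrix (Fin d) (Fin d) ℂ} (hA : A.IsHermitian)
    (htr : A.trace = 1) : ∑ i, hA.eigenvalues i = 1 := by
  have h1 : A.trace = ∑ i, (hA.eigenvalues i : ℂ) := by
    conv_lhs => rw [hA.spectral_theorem, Unitary.conjStarAlgAut_apply]
    rw [Matrix.trace_mul_cycle]
    rw [(Matrix.mem_unitaryGroup_iff').mp (hA.eigenvectorUnitary).2, one_mul]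
    simp [Matrix.trace, Matrix.diag]
  rw [htr] at h1
  exact_mod_cast h1.symm

/-- pinching bound for ℓ¹ deviation: for unitary W, ∑ |re (Wᴴ Δ W)ᵢᵢ| ≤ ∑ |eigenvalues Δ| -/
lemma key_pinch {Δ : Matrix (Fin d) (Fin d) ℂ} (hΔ : Δ.IsHermitian)
    (W : Matrix (Fin d) (Fin d) ℂ) (hW : W ∈ Matrix.unitaryGroup (Fin d) ℂ) :
    ∑ i, |((Wᴴ * Δ * W) i i).re| ≤ ∑ k, |hΔ.eigenvalues k| := by
  set U : Matrix (Fin d) (Fin d) ℂ := (hΔ.eigenvectorUnitary : Matrix (Fin d) (Fin d) ℂ) with hU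
  set M : Matrix (Fin d) (Fin d) ℂ := Wᴴ * U with hM
  have hMu : M ∈ Matrix.unitaryGroup (Fin d) ℂ := by
    rw [hM]
    exact mul_mem (Unitary.star_mem hW) (hΔ.eigenvectorUnitary).2
  have hfact : Wᴴ * Δ * W = M * diagonal ((RCLike.ofReal ∘ hΔ.eigenvalues : Fin d → ℂ)) * Mᴴ := by
    conv_lhs => rw [hΔ.spectral_theorem, Unitary.conjStarAlgAut_apply]
    rw [hM, conjTranspose_mul, conjTranspose_conjTranspose]
    simp only [Matrix.mul_assoc]
    rw [hU, Matrix.star_eq_conjTranspose]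
  have hentry : ∀ i, ((Wᴴ * Δ * W) i i).re
      = ∑ k, hΔ.eigenvalues k * Complex.normSq (M i k) := by
    intro i
    rw [hfact]
    exact diag_entry_re M hΔ.eigenvalues i
  calc ∑ i, |((Wᴴ * Δ * W) i i).re|
      ≤ ∑ i, ∑ k, |hΔ.eigenvalues k| * Complex.normSq (M i k) := by
        apply Finset.sum_le_sum
        intro i _
        rw [hentry i]
        calc |∑ k, hΔ.eigenvalues k * Complex.normSq (M i k)|
            ≤ ∑ k, |hΔ.eigenvalues k * Complex.normSq (M i k)| :=
              Finset.abs_sum_le_sum_abs _ _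
        _ = ∑ k, |hΔ.eigenvalues k| * Complex.normSq (M i k) := by
              apply Finset.sum_congr rfl
              intro k _
              rw [abs_mul, abs_of_nonneg (Complex.normSq_nonneg _)]
  _ = ∑ k, |hΔ.eigenvalues k| := by
        rw [Finset.sum_comm]
        apply Finset.sum_congr rfl
        intro k _
        rw [← Finset.mul_sum, col_sums M hMu k, mul_one]


/-- one-sided Fannes via pinching in the eigenbasis of `B` -/
lemma fannes_onesided (A B : Matrix (Fin d) (Fin d) ℂ)
    (hA : A.PosSemidef) (hB : B.PosSemidef) (hAtr : A.trace = 1) (hBtr : B.trace = 1)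
    (t : ℝ) (ht : t ≤ 2 / Real.exp 1)
    (hkey : ∀ W ∈ Matrix.unitaryGroup (Fin d) ℂ, ∑ i, |((Wᴴ * (A - B) * W) i i).re| ≤ t) :
    (∑ i, -(hA.1.eigenvalues i * Real.log (hA.1.eigenvalues i)))
      - (∑ i, -(hB.1.eigenvalues i * Real.log (hB.1.eigenvalues i)))
      ≤ t * Real.log d + -(t * Real.log t) := by
  set V : Matrix (Fin d) (Fin d) ℂ := (hB.1.eigenvectorUnitary : Matrix (Fin d) (Fin d) ℂ)
    with hVdef
  have hVmem : V ∈ Matrix.unitaryGroup (Fin d) ℂ := (hB.1.eigenvectorUnitary).2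
  set U : Matrix (Fin d) (Fin d) ℂ := (hA.1.eigenvectorUnitary : Matrix (Fin d) (Fin d) ℂ)
    with hUdef
  set M : Matrix (Fin d) (Fin d) ℂ := Vᴴ * U with hMdef
  have hMmem : M ∈ Matrix.unitaryGroup (Fin d) ℂ :=
    mul_mem (Unitary.star_mem hVmem) (hA.1.eigenvectorUnitary).2
  set r : Fin d → ℝ := hA.1.eigenvalues with hrdef
  set q : Fin d → ℝ := hB.1.eigenvalues with hqdef
  set p : Fin d → ℝ := fun i => ∑ j, r j * Complex.normSq (M i j) with hpdef
  have hr0 : ∀ j, 0 ≤ r j := hA.eigenvalues_nonneg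
  have hq0 : ∀ j, 0 ≤ q j := hB.eigenvalues_nonneg
  have hrs : ∑ j, r j = 1 := sum_eigenvalues_eq_one hA.1 hAtr
  have hqs : ∑ j, q j = 1 := sum_eigenvalues_eq_one hB.1 hBtr
  have hp0 : ∀ i, 0 ≤ p i := fun i =>
    Finset.sum_nonneg fun j _ => mul_nonneg (hr0 j) (Complex.normSq_nonneg _)
  have hps : ∑ i, p i = 1 := by
    rw [hpdef]
    rw [Finset.sum_comm]
    calc ∑ j, ∑ i, r j * Complex.normSq (M i j)
        = ∑ j, r j * ∑ i, Complex.normSq (M i j) := by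
          apply Finset.sum_congr rfl; intro j _; rw [Finset.mul_sum]
    _ = ∑ j, r j := by
          apply Finset.sum_congr rfl; intro j _; rw [col_sums M hMmem j, mul_one]
    _ = 1 := hrs
  -- A pinched
  have hAform : ∀ i, ((Vᴴ * A * V) i i).re = p i := by
    intro i
    have hfact : Vᴴ * A * V = M * diagonal ((RCLike.ofReal ∘ r : Fin d → ℂ)) * Mᴴ := by
      conv_lhs => rw [hA.1.spectral_theorem, Unitary.conjStarAlgAut_apply]
      rw [hMdef, conjTranspose_mul, conjTranspose_conjTranspose]
      simp only [Matrix.mul_assoc]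
      rw [hUdef, Matrix.star_eq_conjTranspose]
    rw [hfact, diag_entry_re M r i, hpdef]
  -- B pinched is diagonal
  have hVu : Vᴴ * V = 1 := Matrix.mem_unitaryGroup_iff'.mp hVmem
  have hBform : ∀ i, ((Vᴴ * B * V) i i).re = q i := by
    intro i
    have hfact : Vᴴ * B * V = diagonal ((RCLike.ofReal ∘ q : Fin d → ℂ)) := by
      conv_lhs => rw [hB.1.spectral_theorem, Unitary.conjStarAlgAut_apply]
      rw [Matrix.star_eq_conjTranspose]
      simp only [Matrix.mul_assoc]
      rw [← hVdef, hVu, Matrix.mul_one]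
      rw [← Matrix.mul_assoc, hVu, Matrix.one_mul]
    rw [hfact]
    simp [Matrix.diagonal_apply_eq]
  -- ℓ¹ bound
  have hpq : ∑ i, |p i - q i| ≤ t := by
    have hsub : ∀ i, p i - q i = ((Vᴴ * (A - B) * V) i i).re := by
      intro i
      rw [Matrix.mul_sub, Matrix.sub_mul, Matrix.sub_apply, Complex.sub_re, hAform i, hBform i]
    calc ∑ i, |p i - q i| = ∑ i, |((Vᴴ * (A - B) * V) i i).re| := by
          apply Finset.sum_congr rfl; intro i _; rw [hsub i]
    _ ≤ t := hkey V hVmem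
  -- pinching increases entropy
  have hent : (∑ j, -(r j * Real.log (r j))) ≤ ∑ i, -(p i * Real.log (p i)) := by
    have hswap : (∑ j, -(r j * Real.log (r j)))
        = ∑ i, ∑ j, Complex.normSq (M i j) * -(r j * Real.log (r j)) := by
      rw [Finset.sum_comm]
      apply Finset.sum_congr rfl
      intro j _
      rw [← Finset.sum_mul, col_sums M hMmem j, one_mul]
    rw [hswap]
    apply Finset.sum_le_sum
    intro i _
    rcases eq_or_lt_of_le (hp0 i) with h0 | h0
    · -- p i = 0
      have hz : ∀ j ∈ Finset.univ, r j * Complex.normSq (M i j) = 0 := by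
        intro j hj
        exact (Finset.sum_eq_zero_iff_of_nonneg
          (fun j _ => mul_nonneg (hr0 j) (Complex.normSq_nonneg _))).mp h0.symm j hj
      have : ∀ j ∈ Finset.univ, Complex.normSq (M i j) * -(r j * Real.log (r j)) = 0 := by
        intro j hj
        rcases mul_eq_zero.mp (hz j hj) with h | h
        · rw [h]; simp
        · rw [h]; simp
      rw [Finset.sum_congr rfl this]
      rw [← h0]
      simp
    · -- p i > 0
      calc ∑ j, Complex.normSq (M i j) * -(r j * Real.log (r j))
          ≤ ∑ j, Complex.normSq (M i j) * (-(r j * Real.log (p i)) + p i - r j) := by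
            apply Finset.sum_le_sum
            intro j _
            exact mul_le_mul_of_nonneg_left (eta_tangent (hr0 j) h0) (Complex.normSq_nonneg _)
      _ = -(p i * Real.log (p i)) := by
            have e1 : ∑ j, Complex.normSq (M i j) * (-(r j * Real.log (p i)) + p i - r j)
                = -((∑ j, Complex.normSq (M i j) * r j) * Real.log (p i))
                  + (∑ j, Complex.normSq (M i j)) * p i
                  - ∑ j, Complex.normSq (M i j) * r j := by
              have estep : ∀ j : Fin d, Complex.normSq (M i j) * (-(r j * Real.log (p i)) + p i - r j)
                  = -(Complex.normSq (M i j) * r j * Real.log (p i))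
                    + Complex.normSq (M i j) * p i - Complex.normSq (M i j) * r j := by
                intro j; ring
              rw [Finset.sum_congr rfl (fun j _ => estep j)]
              rw [Finset.sum_sub_distrib, Finset.sum_add_distrib, Finset.sum_neg_distrib,
                ← Finset.sum_mul, ← Finset.sum_mul]
            have e2 : ∑ j, Complex.normSq (M i j) * r j = p i := by
              rw [hpdef]
              apply Finset.sum_congr rfl
              intro j _
              ring
            rw [e1, e2, row_sums M hMmem i, one_mul]
            ring
  -- conclude
  have hclass := classical_fannes p q hp0 hq0 hps hqs t hpq ht
  linarith


end FannesAux

/-- **Fannes' inequality.**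
For density matrices `ρ, σ` on a `d`-dimensional space with trace distance
`T = ½‖ρ-σ‖₁ = ½ ∑ |eigenvalues (ρ-σ)| ≤ 1/e`, the von Neumann entropies satisfy
`|S(ρ) - S(σ)| ≤ 2T log d + η(2T)` with `η(x) = -x log x`. -/
theorem fannes_inequality
    {d : ℕ} (hd : 0 < d) (ρ σ : Matrix (Fin d) (Fin d) ℂ)
    (hρ : ρ.PosSemidef) (hσ : σ.PosSemidef)
    (hρtr : ρ.trace = 1) (hσtr : σ.trace = 1)
    (hdiff : (ρ - σ).IsHermitian)
    (T : ℝ) (hT : T = (1 / 2) * ∑ i, |hdiff.eigenvalues i|)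
    (hTe : T ≤ 1 / Real.exp 1) :
    |(-∑ i, hρ.1.eigenvalues i * Real.log (hρ.1.eigenvalues i))
      - (-∑ i, hσ.1.eigenvalues i * Real.log (hσ.1.eigenvalues i))|
      ≤ 2 * T * Real.log d + (-(2 * T) * Real.log (2 * T)) := by
  have ht : 2 * T ≤ 2 / Real.exp 1 := by
    have : 2 / Real.exp 1 = 2 * (1 / Real.exp 1) := by ring
    linarith
  have hsum : ∑ i, |hdiff.eigenvalues i| = 2 * T := by rw [hT]; ring
  have hkey1 : ∀ W ∈ Matrix.unitaryGroup (Fin d) ℂ,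
      ∑ i, |((Wᴴ * (ρ - σ) * W) i i).re| ≤ 2 * T :=
    fun W hW => le_of_le_of_eq (key_pinch hdiff W hW) hsum
  have hkey2 : ∀ W ∈ Matrix.unitaryGroup (Fin d) ℂ,
      ∑ i, |((Wᴴ * (σ - ρ) * W) i i).re| ≤ 2 * T := by
    intro W hW
    have hneg : Wᴴ * (σ - ρ) * W = -(Wᴴ * (ρ - σ) * W) := by
      rw [show σ - ρ = -(ρ - σ) from (neg_sub ρ σ).symm]
      rw [Matrix.mul_neg, Matrix.neg_mul]
    calc ∑ i, |((Wᴴ * (σ - ρ) * W) i i).re|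
        = ∑ i, |((Wᴴ * (ρ - σ) * W) i i).re| := by
          apply Finset.sum_congr rfl
          intro i _
          rw [hneg, Matrix.neg_apply, Complex.neg_re, abs_neg]
    _ ≤ 2 * T := hkey1 W hW
  have h1 := fannes_onesided ρ σ hρ hσ hρtr hσtr (2 * T) ht hkey1
  have h2 := fannes_onesided σ ρ hσ hρ hσtr hρtr (2 * T) ht hkey2
  have e1 : ∑ i, -(hρ.1.eigenvalues i * Real.log (hρ.1.eigenvalues i))
      = -∑ i, hρ.1.eigenvalues i * Real.log (hρ.1.eigenvalues i) := Finset.sum_neg_distrib _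
  have e2 : ∑ i, -(hσ.1.eigenvalues i * Real.log (hσ.1.eigenvalues i))
      = -∑ i, hσ.1.eigenvalues i * Real.log (hσ.1.eigenvalues i) := Finset.sum_neg_distrib _
  rw [e1, e2] at h1 h2
  rw [abs_sub_le_iff]
  constructor
  · nlinarith [h1]
  · nlinarith [h2]
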